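/- For x, t ∈ {0,1}^n and σ > 0, the Gaussian kernel admits the Fourier-type expansion k(x,t) = exp(-||x-t||²/(2σ²)) = ∑_{a∈{0,1}^n} (1-p_σ)^{n-|a|} p_σ^{|a|} (-1)^{a·t} (-1)^{a·x}, where p_σ = (1 - e^{-1/(2σ²)})/2. -/

import Mathlib

open Finset Matrix

noncomputable section

abbrev Bits (n : ℕ) := Fin n → Bool

def bdot {n : ℕ} (a z : Bits n) : ℕ := (Finset.univ.filter fun i => a i ∧ z i).card

def wt {n : ℕ} (a : Bits n) : ℕ := (Finset.univ.filter fun i => a i).card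

def Zword {n : ℕ} (a : Bits n) : Matrix (Bits n) (Bits n) ℂ :=
  Matrix.diagonal fun z => (-1 : ℂ) ^ bdot a z

def Xword {n : ℕ} (g : Bits n) : Matrix (Bits n) (Bits n) ℂ :=
  Matrix.of fun x y => if (fun i => xor (y i) (g i)) = x then 1 else 0

def gateX {n : ℕ} (θ : ℝ) (g : Bits n) : Matrix (Bits n) (Bits n) ℂ :=
  NormedSpace.exp ((Complex.I * (θ : ℂ)) • Xword g)

def gateZ {n : ℕ} (θ : ℝ) (g : Bits n) : Matrix (Bits n) (Bits n) ℂ :=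
  NormedSpace.exp ((Complex.I * (θ : ℂ)) • Zword g)

def Ucirc {n m : ℕ} (θ : Fin m → ℝ) (g : Fin m → Bits n) : Matrix (Bits n) (Bits n) ℂ :=
  (List.ofFn fun j => gateX (θ j) (g j)).prod

def zeroBits (n : ℕ) : Bits n := fun _ => false

/-- Fourier-type expansion of the Gaussian kernel on bitstrings. -/
theorem gaussian_kernel_fourier_expansion {n : ℕ} (σ : ℝ) (hσ : 0 < σ) (x t : Bits n) :
    let pσ : ℝ := (1 - Real.exp (-(1 / (2 * σ ^ 2)))) / 2
    Real.exp (-(hammingDist x t : ℝ) / (2 * σ ^ 2))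
      = ∑ a : Bits n, (1 - pσ) ^ (n - wt a) * pσ ^ (wt a) *
          (-1 : ℝ) ^ bdot a t * (-1 : ℝ) ^ bdot a x := by
  intro pσ
  set c : ℝ := 1 / (2 * σ ^ 2) with hc
  set f : Fin n → Bool → ℝ := fun i b =>
    if b then pσ * (if t i then -1 else 1) * (if x i then -1 else 1) else (1 - pσ) with hf
  have key : ∀ a : Fin n → Bool,
      (1 - pσ) ^ (n - wt a) * pσ ^ (wt a) * (-1 : ℝ) ^ bdot a t * (-1 : ℝ) ^ bdot a x
        = ∏ i, f i (a i) := by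
    intro a
    have h0 : ∏ i, f i (a i)
        = (∏ i ∈ univ.filter (fun i => a i = true),
            (pσ * (if t i then -1 else 1) * (if x i then -1 else 1)))
          * ∏ i ∈ univ.filter (fun i => ¬ a i = true), (1 - pσ) := by
      simp only [hf]
      rw [Finset.prod_ite]
    rw [h0, Finset.prod_const]
    have h := Finset.card_filter_add_card_filter_not
        (s := (univ : Finset (Fin n))) (p := fun i => a i = true)
    simp only [Finset.card_univ, Fintype.card_fin] at h
    have hw : wt a = (univ.filter fun i => a i = true).card := rfl
    have hcard : (univ.filter fun i => ¬ a i = true).card = n - wt a := by omega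
    rw [hcard]
    rw [Finset.prod_mul_distrib, Finset.prod_mul_distrib, Finset.prod_const]
    have h1 : ∏ i ∈ univ.filter (fun i => a i = true), (if t i then (-1:ℝ) else 1)
        = (-1 : ℝ) ^ bdot a t := by
      rw [Finset.prod_ite, Finset.prod_const, Finset.prod_const, one_pow, mul_one,
        Finset.filter_filter]
      simp [bdot]
    have h2 : ∏ i ∈ univ.filter (fun i => a i = true), (if x i then (-1:ℝ) else 1)
        = (-1 : ℝ) ^ bdot a x := by
      rw [Finset.prod_ite, Finset.prod_const, Finset.prod_const, one_pow, mul_one,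
        Finset.filter_filter]
      simp [bdot]
    rw [h1, h2, ← hw]
    ring
  simp only [key]
  rw [← Fintype.piFinset_univ, ← Finset.prod_univ_sum]
  have hp : 1 - 2 * pσ = Real.exp (-c) := by
    simp only [pσ]; ring
  have hstep : ∀ i, ∑ b, f i b = if x i = t i then 1 else Real.exp (-c) := by
    intro i
    cases hxi : x i <;> cases hti : t i <;>
      simp [hf, hxi, hti, Fintype.sum_bool] <;> try linarith
  simp only [hstep]
  rw [Finset.prod_ite, Finset.prod_const, Finset.prod_const, one_pow, one_mul,
    ← Real.exp_nat_mul]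
  have hd : (hammingDist x t : ℕ) = (univ.filter fun i => ¬ x i = t i).card := by
    rfl
  rw [← hd]
  congr 1
  rw [hc]
  field_simp
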